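/- arXiv:1510.01858 — 2 statements merged into one kernel-verified Lean document; each statement's English description precedes it below -/
import Mathlib

section
/- Truncated first moment of a bivariate normal vector (identity (EQ_GBM) = (EQ_GBM_true)): let T > 0, σ₁ ∈ ℝ, ρ ∈ (−1,1), and let (Y₁, Y₂) be bivariate normal with means (σ₁T, ρσ₁T), variances (T, T), and correlation ρ. Then for all k, h ∈ ℝ, with x̂ = (k − σ₁T)/√T and ŷ = (h − ρσ₁T)/√T, E[ Y₁ · 1_{{Y₁ > k}} · 1_{{Y₂ > h}} ] = σ₁T · Φ̄(x̂, ŷ, ρ) + √T · [ φ(x̂) · Φ̄((ŷ − ρx̂)/√(1−ρ²)) + ρ φ(ŷ) · Φ̄((x̂ − ρŷ)/√(1−ρ²)) ]. -/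
open MeasureTheory ProbabilityTheory

/-- The standard normal density `φ`. -/
noncomputable def stdNormalPDF (x : ℝ) : ℝ :=
  Real.exp (-x ^ 2 / 2) / Real.sqrt (2 * Real.pi)

/-- The standard normal upper tail `Φ̄(x) = 1 − Φ(x)`. -/
noncomputable def stdNormalTail (x : ℝ) : ℝ :=
  ∫ t in Set.Ioi x, stdNormalPDF t

/-- The standard bivariate normal upper tail `Φ̄(x, y, ρ) = P(Z₁ > x, Z₂ > y)` for a standard
bivariate normal pair with correlation `ρ`. -/
noncomputable def biNormalTail (x y ρ : ℝ) : ℝ :=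
  ∫ p in Set.Ioi x ×ˢ Set.Ioi y,
    Real.exp (-(p.1 ^ 2 - 2 * ρ * p.1 * p.2 + p.2 ^ 2) / (2 * (1 - ρ ^ 2))) /
      (2 * Real.pi * Real.sqrt (1 - ρ ^ 2))

open Set Filter Real
open scoped NNReal ENNReal

lemma sn_nonneg (x : ℝ) : 0 ≤ stdNormalPDF x :=
  div_nonneg (Real.exp_nonneg _) (Real.sqrt_nonneg _)

lemma sn_cont : Continuous stdNormalPDF := by
  unfold stdNormalPDF
  fun_prop

lemma sn_meas : Measurable stdNormalPDF := sn_cont.measurable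

lemma sn_eq (x : ℝ) : stdNormalPDF x = Real.exp (-(1/2) * x ^ 2) / Real.sqrt (2 * Real.pi) := by
  unfold stdNormalPDF; ring_nf

lemma sn_integrable : Integrable stdNormalPDF := by
  have h := (integrable_exp_neg_mul_sq (by norm_num : (0:ℝ) < 1/2)).div_const (Real.sqrt (2 * Real.pi))
  convert h using 2 with x
  rw [sn_eq]

lemma sn_integral : ∫ x, stdNormalPDF x = 1 := by
  have h : ∫ x, stdNormalPDF x = (∫ x, Real.exp (-(1/2) * x ^ 2)) / Real.sqrt (2 * Real.pi) := by
    rw [← integral_div]; exact integral_congr_ae (Filter.Eventually.of_forall fun x => sn_eq x)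
  rw [h, integral_gaussian]
  rw [show Real.pi / (1/2) = 2 * Real.pi by ring]
  have : Real.sqrt (2 * Real.pi) ≠ 0 := by positivity
  field_simp

lemma sn_mul_integrable : Integrable (fun x => x * stdNormalPDF x) := by
  have h := (integrable_mul_exp_neg_mul_sq (by norm_num : (0:ℝ) < 1/2)).div_const (Real.sqrt (2 * Real.pi))
  convert h using 2 with x
  rw [sn_eq]; ring

lemma tail_nonneg (x : ℝ) : 0 ≤ stdNormalTail x :=
  setIntegral_nonneg measurableSet_Ioi fun t _ => sn_nonneg t

lemma tail_le_one (x : ℝ) : stdNormalTail x ≤ 1 := by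
  rw [← sn_integral]
  exact setIntegral_le_integral sn_integrable (Filter.Eventually.of_forall fun t => sn_nonneg t)

lemma tail_eq (x : ℝ) : stdNormalTail x = stdNormalTail 0 - ∫ t in (0:ℝ)..x, stdNormalPDF t := by
  have key : ∀ y : ℝ, stdNormalTail y = (∫ t, stdNormalPDF t) - ∫ t in Set.Iic y, stdNormalPDF t := by
    intro y
    have := intervalIntegral.integral_Iic_add_Ioi (b := y)
      (sn_integrable.integrableOn) (sn_integrable.integrableOn)
    unfold stdNormalTail
    linarith [this]
  rw [key x, key 0, ← intervalIntegral.integral_Iic_sub_Iic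
    sn_integrable.integrableOn sn_integrable.integrableOn]
  ring

lemma tail_hasDeriv (x : ℝ) : HasDerivAt stdNormalTail (-(stdNormalPDF x)) x := by
  have h1 : HasDerivAt (fun u => ∫ t in (0:ℝ)..u, stdNormalPDF t) (stdNormalPDF x) x := by
    apply intervalIntegral.integral_hasDerivAt_right
      (sn_integrable.intervalIntegrable)
      sn_cont.stronglyMeasurable.stronglyMeasurableAtFilter
      sn_cont.continuousAt
  have h2 := (hasDerivAt_const x (stdNormalTail 0)).sub h1
  simp only [zero_sub] at h2
  exact h2.congr_of_eventuallyEq (Filter.Eventually.of_forall fun u => tail_eq u)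

lemma tail_continuous : Continuous stdNormalTail :=
  continuous_iff_continuousAt.2 fun x => (tail_hasDeriv x).continuousAt

lemma tail_tendsto_zero : Tendsto stdNormalTail atTop (nhds 0) := by
  have h1 : Tendsto (fun x => ∫ t in (0:ℝ)..x, stdNormalPDF t) atTop
      (nhds (∫ t in Set.Ioi (0:ℝ), stdNormalPDF t)) :=
    intervalIntegral_tendsto_integral_Ioi 0 sn_integrable.integrableOn tendsto_id
  have h2 : Tendsto (fun x => stdNormalTail 0 - ∫ t in (0:ℝ)..x, stdNormalPDF t) atTop
      (nhds (stdNormalTail 0 - ∫ t in Set.Ioi (0:ℝ), stdNormalPDF t)) :=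
    (tendsto_const_nhds).sub h1
  have : stdNormalTail 0 - ∫ t in Set.Ioi (0:ℝ), stdNormalPDF t = 0 := by
    unfold stdNormalTail; ring
  rw [this] at h2
  exact h2.congr fun x => (tail_eq x).symm

/-- Translation for integrals over `Ioi`. -/
lemma integral_Ioi_comp_sub_right (g : ℝ → ℝ) (b y : ℝ) :
    ∫ z in Set.Ioi y, g (z - b) = ∫ x in Set.Ioi (y - b), g x := by
  have hmap : Measure.map (fun z : ℝ => z - b) volume = volume := by
    simpa using map_sub_right_eq_self (volume : Measure ℝ) b
  have hemb : MeasurableEmbedding (fun z : ℝ => z - b) :=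
    (MeasurableEquiv.subRight b).measurableEmbedding
  have h : ∫ x in Set.Ioi (y - b), g x
      = ∫ z in (fun z : ℝ => z - b) ⁻¹' Set.Ioi (y - b), g (z - b) := by
    conv_lhs => rw [← hmap]
    rw [hemb.setIntegral_map]
  rw [h]
  congr 1
  ext z
  simp

/-- Affine substitution: `∫_{z>y} φ((z-b)/c) dz = c Φ̄((y-b)/c)` for `c > 0`. -/
lemma integral_Ioi_sn_affine {c : ℝ} (hc : 0 < c) (b y : ℝ) :
    ∫ z in Set.Ioi y, stdNormalPDF ((z - b) / c) = c * stdNormalTail ((y - b) / c) := by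
  rw [integral_Ioi_comp_sub_right (fun x => stdNormalPDF (x / c)) b y]
  have h3 := integral_comp_mul_right_Ioi (fun x => stdNormalPDF x) (y - b) (inv_pos.2 hc)
  simp only [smul_eq_mul, inv_inv] at h3
  simp only [div_eq_mul_inv]
  rw [h3]
  rfl

/-- Full-line version: `∫ φ((z-b)/c) dz = c` for `c > 0`. -/
lemma integral_sn_affine {c : ℝ} (hc : 0 < c) (b : ℝ) :
    ∫ z, stdNormalPDF ((z - b) / c) = c := by
  have h1 : ∫ z, stdNormalPDF ((z - b) / c) = ∫ z, stdNormalPDF (z / c) := by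
    exact integral_sub_right_eq_self (fun z => stdNormalPDF (z / c)) b
  rw [h1, MeasureTheory.Measure.integral_comp_div (fun x => stdNormalPDF x) c, sn_integral,
    smul_eq_mul, mul_one, abs_of_pos hc]

lemma sn_affine_integrable {c : ℝ} (hc : c ≠ 0) (b : ℝ) :
    Integrable (fun z => stdNormalPDF ((z - b) / c)) := by
  have := (sn_integrable.comp_div hc).comp_sub_right b
  exact this

lemma sn_mul (u v : ℝ) :
    stdNormalPDF u * stdNormalPDF v = Real.exp (-(u ^ 2 + v ^ 2) / 2) / (2 * Real.pi) := by
  unfold stdNormalPDF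
  rw [div_mul_div_comm, ← Real.exp_add, Real.mul_self_sqrt (by positivity)]
  congr 1
  ring

lemma c_pos {ρ : ℝ} (hρ₁ : -1 < ρ) (hρ₂ : ρ < 1) : 0 < Real.sqrt (1 - ρ ^ 2) := by
  apply Real.sqrt_pos.2; nlinarith

lemma c_sq {ρ : ℝ} (hρ₁ : -1 < ρ) (hρ₂ : ρ < 1) :
    Real.sqrt (1 - ρ ^ 2) ^ 2 = 1 - ρ ^ 2 :=
  Real.sq_sqrt (by nlinarith)

/-- Key symmetry identity: `φ(x) φ((y-ρx)/c) = φ(y) φ((x-ρy)/c)`. -/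
lemma sn_symm {ρ : ℝ} (hρ₁ : -1 < ρ) (hρ₂ : ρ < 1) (x y : ℝ) :
    stdNormalPDF x * stdNormalPDF ((y - ρ * x) / Real.sqrt (1 - ρ ^ 2))
      = stdNormalPDF y * stdNormalPDF ((x - ρ * y) / Real.sqrt (1 - ρ ^ 2)) := by
  have hcsq : Real.sqrt (1 - ρ ^ 2) ^ 2 = 1 - ρ ^ 2 := c_sq hρ₁ hρ₂
  have hne : (1 : ℝ) - ρ ^ 2 ≠ 0 := by nlinarith
  rw [sn_mul, sn_mul]
  congr 2
  rw [div_pow, div_pow, hcsq]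
  field_simp
  ring

/-- The bivariate normal density factorizes. -/
lemma biDens_eq {ρ : ℝ} (hρ₁ : -1 < ρ) (hρ₂ : ρ < 1) (x z : ℝ) :
    Real.exp (-(x ^ 2 - 2 * ρ * x * z + z ^ 2) / (2 * (1 - ρ ^ 2))) /
      (2 * Real.pi * Real.sqrt (1 - ρ ^ 2))
    = stdNormalPDF x * (stdNormalPDF ((z - ρ * x) / Real.sqrt (1 - ρ ^ 2))
        / Real.sqrt (1 - ρ ^ 2)) := by
  have hcsq : Real.sqrt (1 - ρ ^ 2) ^ 2 = 1 - ρ ^ 2 := c_sq hρ₁ hρ₂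
  have hne : (1 : ℝ) - ρ ^ 2 ≠ 0 := by nlinarith
  rw [← mul_div_assoc, sn_mul, div_div]
  congr 2
  · rw [div_pow, hcsq]
    field_simp
    ring

lemma sn_tendsto : Tendsto stdNormalPDF atTop (nhds 0) := by
  have h1 : Tendsto (fun x : ℝ => -x ^ 2 / 2) atTop atBot := by
    apply Filter.Tendsto.atBot_div_const (by norm_num : (0:ℝ) < 2)
    exact tendsto_neg_atBot_iff.2 (tendsto_pow_atTop (by norm_num))
  have h2 : Tendsto (fun x : ℝ => Real.exp (-x ^ 2 / 2)) atTop (nhds 0) :=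
    Real.tendsto_exp_atBot.comp h1
  have h3 := h2.div_const (Real.sqrt (2 * Real.pi))
  rw [zero_div] at h3
  exact h3

lemma sn_hasDeriv (x : ℝ) : HasDerivAt stdNormalPDF (-x * stdNormalPDF x) x := by
  have h1 : HasDerivAt (fun x : ℝ => -x ^ 2 / 2) (-x) x := by
    have := ((hasDerivAt_pow 2 x).neg).div_const 2
    exact this.congr_deriv (by norm_num; ring)
  have h2 : HasDerivAt (fun x : ℝ => Real.exp (-x ^ 2 / 2))
      (Real.exp (-x ^ 2 / 2) * (-x)) x := (Real.hasDerivAt_exp _).comp x h1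
  have h3 := h2.div_const (Real.sqrt (2 * Real.pi))
  exact h3.congr_deriv (by unfold stdNormalPDF; ring)

lemma int_sn_tail {ρ : ℝ} (c yh : ℝ) :
    Integrable (fun x => stdNormalPDF x * stdNormalTail ((yh - ρ * x) / c)) := by
  apply sn_integrable.mono
  · exact (sn_cont.mul (tail_continuous.comp (by fun_prop))).aestronglyMeasurable
  · refine Filter.Eventually.of_forall fun x => ?_
    rw [Real.norm_eq_abs, Real.norm_eq_abs, abs_mul, abs_of_nonneg (sn_nonneg x),
      abs_of_nonneg (tail_nonneg _)]
    nlinarith [tail_le_one ((yh - ρ * x) / c), sn_nonneg x, tail_nonneg ((yh - ρ * x) / c)]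

lemma int_x_sn_tail {ρ : ℝ} (c yh : ℝ) :
    Integrable (fun x => x * stdNormalPDF x * stdNormalTail ((yh - ρ * x) / c)) := by
  apply sn_mul_integrable.mono
  · exact ((continuous_id.mul sn_cont).mul (tail_continuous.comp (by fun_prop))).aestronglyMeasurable
  · refine Filter.Eventually.of_forall fun x => ?_
    rw [Real.norm_eq_abs, Real.norm_eq_abs, abs_mul]
    have h1 : |stdNormalTail ((yh - ρ * x) / c)| ≤ 1 := by
      rw [abs_of_nonneg (tail_nonneg _)]; exact tail_le_one _
    nlinarith [abs_nonneg (x * stdNormalPDF x)]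

/-- FTC part: `∫_{x>x̂} x φ(x) Φ̄((ŷ-ρx)/c) = φ(x̂)Φ̄((ŷ-ρx̂)/c) + ρφ(ŷ)Φ̄((x̂-ρŷ)/c)`. -/
lemma lemC {ρ : ℝ} (hρ₁ : -1 < ρ) (hρ₂ : ρ < 1) (xh yh : ℝ) :
    ∫ x in Set.Ioi xh, x * stdNormalPDF x * stdNormalTail ((yh - ρ * x) / Real.sqrt (1 - ρ ^ 2))
      = stdNormalPDF xh * stdNormalTail ((yh - ρ * xh) / Real.sqrt (1 - ρ ^ 2))
        + ρ * stdNormalPDF yh * stdNormalTail ((xh - ρ * yh) / Real.sqrt (1 - ρ ^ 2)) := by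
  set c := Real.sqrt (1 - ρ ^ 2) with hcdef
  have hc : 0 < c := c_pos hρ₁ hρ₂
  set f : ℝ → ℝ := fun x => -(stdNormalPDF x * stdNormalTail ((yh - ρ * x) / c))
      - ρ * stdNormalPDF yh * stdNormalTail ((x - ρ * yh) / c) with hf
  have hcont : Continuous f := by
    apply Continuous.sub
    · exact (sn_cont.mul (tail_continuous.comp (by fun_prop))).neg
    · exact continuous_const.mul (tail_continuous.comp (by fun_prop))
  have hderiv : ∀ x ∈ Set.Ioi xh, HasDerivAt f
      (x * stdNormalPDF x * stdNormalTail ((yh - ρ * x) / c)) x := by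
    intro x _
    have dm : HasDerivAt (fun x : ℝ => (yh - ρ * x) / c) (-ρ / c) x := by
      have := ((hasDerivAt_const x yh).sub ((hasDerivAt_id x).const_mul ρ)).div_const c
      simpa using this
    have dn : HasDerivAt (fun x : ℝ => (x - ρ * yh) / c) (1 / c) x := by
      have := ((hasDerivAt_id x).sub (hasDerivAt_const x (ρ * yh))).div_const c
      simpa using this
    have dΨm : HasDerivAt (fun x : ℝ => stdNormalTail ((yh - ρ * x) / c))
        (-(stdNormalPDF ((yh - ρ * x) / c)) * (-ρ / c)) x :=
      (tail_hasDeriv _).comp x dm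
    have dΨn : HasDerivAt (fun x : ℝ => stdNormalTail ((x - ρ * yh) / c))
        (-(stdNormalPDF ((x - ρ * yh) / c)) * (1 / c)) x :=
      (tail_hasDeriv _).comp x dn
    have d1 : HasDerivAt (fun x : ℝ => stdNormalPDF x * stdNormalTail ((yh - ρ * x) / c))
        ((-x * stdNormalPDF x) * stdNormalTail ((yh - ρ * x) / c)
          + stdNormalPDF x * (-(stdNormalPDF ((yh - ρ * x) / c)) * (-ρ / c))) x :=
      (sn_hasDeriv x).mul dΨm
    have d := d1.neg.sub (dΨn.const_mul (ρ * stdNormalPDF yh))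
    refine d.congr_deriv ?_
    have hsymm := sn_symm hρ₁ hρ₂ x yh
    rw [← hcdef] at hsymm
    linear_combination (-ρ / c) * hsymm
  have hf'int : IntegrableOn
      (fun x => x * stdNormalPDF x * stdNormalTail ((yh - ρ * x) / c)) (Set.Ioi xh) :=
    (int_x_sn_tail c yh).integrableOn
  have ht1 : Tendsto (fun x => stdNormalPDF x * stdNormalTail ((yh - ρ * x) / c)) atTop (nhds 0) := by
    apply squeeze_zero_norm (fun x => ?_) sn_tendsto
    rw [Real.norm_eq_abs, abs_mul, abs_of_nonneg (sn_nonneg x), abs_of_nonneg (tail_nonneg _)]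
    nlinarith [tail_le_one ((yh - ρ * x) / c), sn_nonneg x, tail_nonneg ((yh - ρ * x) / c)]
  have ht2 : Tendsto (fun x => stdNormalTail ((x - ρ * yh) / c)) atTop (nhds 0) := by
    apply tail_tendsto_zero.comp
    apply Filter.Tendsto.atTop_div_const hc
    exact tendsto_atTop_add_const_right _ _ tendsto_id
  have htend : Tendsto f atTop (nhds 0) := by
    have := (ht1.neg).sub ((ht2.const_mul (ρ * stdNormalPDF yh)).const_mul 1)
    simp only [neg_zero, mul_zero, sub_zero, one_mul] at this
    rw [show (0:ℝ) = -0 - ρ * stdNormalPDF yh * 0 by ring]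
    exact (ht1.neg).sub ((ht2.const_mul (ρ * stdNormalPDF yh)))
  have key := MeasureTheory.integral_Ioi_of_hasDerivAt_of_tendsto
    (hcont.continuousWithinAt) hderiv hf'int htend
  rw [key, hf]
  ring

lemma biDens_integrable {ρ : ℝ} (hρ₁ : -1 < ρ) (hρ₂ : ρ < 1) :
    Integrable (fun p : ℝ × ℝ =>
      stdNormalPDF p.1 * (stdNormalPDF ((p.2 - ρ * p.1) / Real.sqrt (1 - ρ ^ 2))
        / Real.sqrt (1 - ρ ^ 2))) ((volume : Measure ℝ).prod volume) := by
  set c := Real.sqrt (1 - ρ ^ 2) with hcdef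
  have hc : 0 < c := c_pos hρ₁ hρ₂
  have hmeas : AEStronglyMeasurable (fun p : ℝ × ℝ =>
      stdNormalPDF p.1 * (stdNormalPDF ((p.2 - ρ * p.1) / c) / c))
      ((volume : Measure ℝ).prod volume) := by
    apply Continuous.aestronglyMeasurable
    exact (sn_cont.comp continuous_fst).mul
      ((sn_cont.comp (by fun_prop)).div_const c)
  rw [MeasureTheory.integrable_prod_iff hmeas]
  constructor
  · refine Filter.Eventually.of_forall fun x => ?_
    simpa using (((sn_affine_integrable hc.ne' (ρ * x)).div_const c).const_mul (stdNormalPDF x))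
  · apply MeasureTheory.Integrable.congr sn_integrable
    refine Filter.Eventually.of_forall fun x => ?_
    have h1 : ∀ z : ℝ, ‖stdNormalPDF x * (stdNormalPDF ((z - ρ * x) / c) / c)‖
        = stdNormalPDF x * (stdNormalPDF ((z - ρ * x) / c) / c) := by
      intro z
      rw [Real.norm_eq_abs, abs_of_nonneg]
      have := sn_nonneg x
      have := sn_nonneg ((z - ρ * x) / c)
      positivity
    simp only [h1]
    rw [integral_const_mul, integral_div, integral_sn_affine hc (ρ * x),
      div_self hc.ne', mul_one]

/-- Lemma B: the bivariate tail as a single integral. -/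
lemma biNormalTail_eq {ρ : ℝ} (hρ₁ : -1 < ρ) (hρ₂ : ρ < 1) (x y : ℝ) :
    biNormalTail x y ρ = ∫ t in Set.Ioi x,
      stdNormalPDF t * stdNormalTail ((y - ρ * t) / Real.sqrt (1 - ρ ^ 2)) := by
  set c := Real.sqrt (1 - ρ ^ 2) with hcdef
  have hc : 0 < c := c_pos hρ₁ hρ₂
  unfold biNormalTail
  rw [show (volume : Measure (ℝ × ℝ)) = (volume : Measure ℝ).prod volume from
    MeasureTheory.Measure.volume_eq_prod ℝ ℝ]
  have hcongr : ∫ p in Set.Ioi x ×ˢ Set.Ioi y,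
        Real.exp (-(p.1 ^ 2 - 2 * ρ * p.1 * p.2 + p.2 ^ 2) / (2 * (1 - ρ ^ 2))) /
          (2 * Real.pi * c) ∂((volume : Measure ℝ).prod volume)
      = ∫ p in Set.Ioi x ×ˢ Set.Ioi y,
          stdNormalPDF p.1 * (stdNormalPDF ((p.2 - ρ * p.1) / c) / c)
          ∂((volume : Measure ℝ).prod volume) := by
    apply integral_congr_ae
    exact Filter.Eventually.of_forall fun p => biDens_eq hρ₁ hρ₂ p.1 p.2
  rw [hcongr, MeasureTheory.setIntegral_prod _ ((biDens_integrable hρ₁ hρ₂).integrableOn)]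
  apply setIntegral_congr_fun measurableSet_Ioi
  intro t _
  simp only
  rw [integral_const_mul, integral_div, integral_Ioi_sn_affine hc (ρ * t) y]
  rw [← hcdef]
  field_simp

lemma gpdf_eq : gaussianPDFReal 0 1 = stdNormalPDF := by
  funext x
  unfold gaussianPDFReal stdNormalPDF
  norm_num
  rw [div_eq_inv_mul]
  ring

lemma gaussianPDF_eq (x : ℝ) : gaussianPDF 0 1 x = ENNReal.ofReal (stdNormalPDF x) := by
  rw [gaussianPDF, gpdf_eq]

lemma gaussian_eq : gaussianReal 0 1
    = (volume : Measure ℝ).withDensity (fun x => ENNReal.ofReal (stdNormalPDF x)) := by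
  rw [gaussianReal_of_var_ne_zero 0 one_ne_zero]
  congr 1
  funext x
  exact gaussianPDF_eq x

lemma prod_gauss : (gaussianReal 0 1).prod (gaussianReal 0 1)
    = ((volume : Measure ℝ).prod volume).withDensity
        (fun p => ENNReal.ofReal (stdNormalPDF p.1) * ENNReal.ofReal (stdNormalPDF p.2)) := by
  refine Measure.prod_eq fun s t hs ht => ?_
  rw [withDensity_apply _ (hs.prod ht), ← Measure.prod_restrict,
    lintegral_prod_mul ((sn_meas.ennreal_ofReal).aemeasurable) ((sn_meas.ennreal_ofReal).aemeasurable),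
    gaussianReal_apply 0 one_ne_zero s, gaussianReal_apply 0 one_ne_zero t]
  congr 1 <;> · apply lintegral_congr_ae
                exact Filter.Eventually.of_forall fun x => (gaussianPDF_eq x).symm

/-- **Truncated first moment of a bivariate normal vector** (identity (EQ_GBM)). For `(Y₁,Y₂)`
bivariate normal with means `(σ₁T, ρσ₁T)`, variances `(T, T)` and correlation `ρ`, and
`x̂ = (k − σ₁T)/√T`, `ŷ = (h − ρσ₁T)/√T`,
`E[Y₁ 1_{Y₁ > k} 1_{Y₂ > h}] = σ₁T Φ̄(x̂, ŷ, ρ)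
  + √T (φ(x̂)Φ̄((ŷ − ρx̂)/√(1−ρ²)) + ρφ(ŷ)Φ̄((x̂ − ρŷ)/√(1−ρ²)))`. -/
theorem bivariate_normal_truncated_first_moment
    {Ω : Type*} [MeasurableSpace Ω] (μ : Measure Ω) [IsProbabilityMeasure μ]
    (ξ : Fin 2 → Ω → ℝ) (hmξ : ∀ i, Measurable (ξ i))
    (hindep : iIndepFun ξ μ)
    (hgauss : ∀ i, Measure.map (ξ i) μ = gaussianReal 0 1)
    (T σ₁ ρ : ℝ) (hT : 0 < T) (hρ₁ : -1 < ρ) (hρ₂ : ρ < 1)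
    (k h : ℝ) :
    ∫ ω in {ω | k < σ₁ * T + Real.sqrt T * ξ 0 ω
        ∧ h < ρ * σ₁ * T + Real.sqrt T * (ρ * ξ 0 ω + Real.sqrt (1 - ρ ^ 2) * ξ 1 ω)},
      (σ₁ * T + Real.sqrt T * ξ 0 ω) ∂μ
      = σ₁ * T * biNormalTail ((k - σ₁ * T) / Real.sqrt T)
          ((h - ρ * σ₁ * T) / Real.sqrt T) ρ
        + Real.sqrt T *
          (stdNormalPDF ((k - σ₁ * T) / Real.sqrt T) *
            stdNormalTail (((h - ρ * σ₁ * T) / Real.sqrt T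
                - ρ * ((k - σ₁ * T) / Real.sqrt T)) / Real.sqrt (1 - ρ ^ 2))
          + ρ * stdNormalPDF ((h - ρ * σ₁ * T) / Real.sqrt T) *
            stdNormalTail (((k - σ₁ * T) / Real.sqrt T
                - ρ * ((h - ρ * σ₁ * T) / Real.sqrt T)) / Real.sqrt (1 - ρ ^ 2))) := by
  have hs : 0 < Real.sqrt T := Real.sqrt_pos.2 hT
  have hc : 0 < Real.sqrt (1 - ρ ^ 2) := c_pos hρ₁ hρ₂
  set s := Real.sqrt T with hsdef
  set c := Real.sqrt (1 - ρ ^ 2) with hcdef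
  set a := σ₁ * T with hadef
  set xh := (k - σ₁ * T) / s with hxhdef
  set yh := (h - ρ * σ₁ * T) / s with hyhdef
  -- the pair map and its law
  set pair : Ω → ℝ × ℝ := fun ω => (ξ 0 ω, ξ 1 ω) with hpairdef
  have hpair : Measurable pair := (hmξ 0).prodMk (hmξ 1)
  have hmap : μ.map pair = (gaussianReal 0 1).prod (gaussianReal 0 1) := by
    rw [show (gaussianReal 0 1).prod (gaussianReal 0 1)
        = (μ.map (ξ 0)).prod (μ.map (ξ 1)) by rw [hgauss 0, hgauss 1]]
    exact (indepFun_iff_map_prod_eq_prod_map_map (hmξ 0).aemeasurable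
      (hmξ 1).aemeasurable).mp (hindep.indepFun (by decide))
  set A : Set (ℝ × ℝ) := {p | k < σ₁ * T + s * p.1 ∧ h < ρ * σ₁ * T + s * (ρ * p.1 + c * p.2)}
    with hAdef
  have hA : MeasurableSet A := by
    have h1 : MeasurableSet {p : ℝ × ℝ | k < σ₁ * T + s * p.1} :=
      measurableSet_lt measurable_const (by fun_prop)
    have h2 : MeasurableSet {p : ℝ × ℝ | h < ρ * σ₁ * T + s * (ρ * p.1 + c * p.2)} :=
      measurableSet_lt measurable_const (by fun_prop)
    exact h1.inter h2
  -- membership equivalences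
  have hiff1 : ∀ x : ℝ, xh < x ↔ k < σ₁ * T + s * x := by
    intro x
    rw [hxhdef, div_lt_iff₀ hs]
    constructor <;> intro hx <;> nlinarith
  have hiff2 : ∀ x y : ℝ, (yh - ρ * x) / c < y ↔ h < ρ * σ₁ * T + s * (ρ * x + c * y) := by
    intro x y
    rw [div_lt_iff₀ hc, hyhdef, sub_lt_iff_lt_add, div_lt_iff₀ hs]
    constructor <;> intro hx <;> nlinarith
  -- rewrite the LHS as an integral over A w.r.t. the product Gaussian law
  have hsetEq : {ω | k < σ₁ * T + s * ξ 0 ω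
      ∧ h < ρ * σ₁ * T + s * (ρ * ξ 0 ω + c * ξ 1 ω)} = pair ⁻¹' A := rfl
  have hFmeas : AEStronglyMeasurable (fun p : ℝ × ℝ => σ₁ * T + s * p.1)
      (μ.map pair) := (by fun_prop : Continuous fun p : ℝ × ℝ => σ₁ * T + s * p.1).aestronglyMeasurable
  rw [hsetEq]
  have hstep : ∫ ω in pair ⁻¹' A, (σ₁ * T + s * ξ 0 ω) ∂μ
      = ∫ p in A, (σ₁ * T + s * p.1) ∂(Measure.map pair μ) :=
    (MeasureTheory.setIntegral_map hA hFmeas hpair.aemeasurable).symm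
  rw [hstep, hmap, prod_gauss]
  -- remove the density
  have hDeq : (fun p : ℝ × ℝ => ENNReal.ofReal (stdNormalPDF p.1) * ENNReal.ofReal (stdNormalPDF p.2))
      = (fun p : ℝ × ℝ =>
          (((stdNormalPDF p.1).toNNReal * (stdNormalPDF p.2).toNNReal : ℝ≥0) : ℝ≥0∞)) := by
    funext p
    rw [ENNReal.coe_mul]
    rfl
  have hDmeas : Measurable fun p : ℝ × ℝ =>
      (stdNormalPDF p.1).toNNReal * (stdNormalPDF p.2).toNNReal :=
    ((sn_meas.comp measurable_fst).real_toNNReal).mul ((sn_meas.comp measurable_snd).real_toNNReal)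
  rw [hDeq, setIntegral_withDensity_eq_setIntegral_smul hDmeas _ hA]
  have hcongr1 : ∫ p in A, ((stdNormalPDF p.1).toNNReal * (stdNormalPDF p.2).toNNReal : ℝ≥0)
        • (σ₁ * T + s * p.1) ∂((volume : Measure ℝ).prod volume)
      = ∫ p in A, stdNormalPDF p.1 * stdNormalPDF p.2 * (σ₁ * T + s * p.1)
          ∂((volume : Measure ℝ).prod volume) := by
    apply setIntegral_congr_fun hA
    intro p _
    have e1 : ((stdNormalPDF p.1).toNNReal : ℝ) = stdNormalPDF p.1 :=
      Real.coe_toNNReal _ (sn_nonneg p.1)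
    have e2 : ((stdNormalPDF p.2).toNNReal : ℝ) = stdNormalPDF p.2 :=
      Real.coe_toNNReal _ (sn_nonneg p.2)
    show ((stdNormalPDF p.1).toNNReal * (stdNormalPDF p.2).toNNReal : ℝ≥0)
        • (σ₁ * T + s * p.1) = stdNormalPDF p.1 * stdNormalPDF p.2 * (σ₁ * T + s * p.1)
    rw [NNReal.smul_def, NNReal.coe_mul, e1, e2, smul_eq_mul]
  rw [hcongr1]
  set f₀ : ℝ × ℝ → ℝ := fun p => stdNormalPDF p.1 * stdNormalPDF p.2 * (σ₁ * T + s * p.1)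
    with hf₀def
  rw [← integral_indicator hA]
  -- integrability of the indicator function
  have hf₀cont : Continuous f₀ := by
    apply Continuous.mul
    · exact (sn_cont.comp continuous_fst).mul (sn_cont.comp continuous_snd)
    · fun_prop
  have habs : Integrable (fun x : ℝ => |a| * stdNormalPDF x + s * (|x| * stdNormalPDF x)) := by
    refine (sn_integrable.const_mul _).add (Integrable.const_mul ?_ _)
    apply sn_mul_integrable.abs.congr
    refine Filter.Eventually.of_forall fun x => ?_
    show |x * stdNormalPDF x| = |x| * stdNormalPDF x
    rw [abs_mul, abs_of_nonneg (sn_nonneg x)]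
  have hH : Integrable (fun p : ℝ × ℝ =>
      (|a| * stdNormalPDF p.1 + s * (|p.1| * stdNormalPDF p.1)) * stdNormalPDF p.2)
      ((volume : Measure ℝ).prod volume) := habs.mul_prod sn_integrable
  have hGint : Integrable (A.indicator f₀) ((volume : Measure ℝ).prod volume) := by
    apply hH.mono ((hf₀cont.measurable.indicator hA).aestronglyMeasurable)
    refine Filter.Eventually.of_forall fun p => ?_
    refine le_trans (norm_indicator_le_norm_self f₀ p) ?_
    have hnn : (0:ℝ) ≤ (|a| * stdNormalPDF p.1
        + s * (|p.1| * stdNormalPDF p.1)) * stdNormalPDF p.2 :=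
      mul_nonneg (add_nonneg (mul_nonneg (abs_nonneg _) (sn_nonneg _))
        (mul_nonneg hs.le (mul_nonneg (abs_nonneg _) (sn_nonneg _)))) (sn_nonneg _)
    show ‖stdNormalPDF p.1 * stdNormalPDF p.2 * (σ₁ * T + s * p.1)‖ ≤ _
    simp only [Real.norm_eq_abs]
    rw [abs_mul, abs_mul, abs_of_nonneg (sn_nonneg p.1), abs_of_nonneg (sn_nonneg p.2),
      abs_of_nonneg hnn]
    have h2 : |s * p.1| = s * |p.1| := by rw [abs_mul, abs_of_nonneg hs.le]
    have h1 : |σ₁ * T + s * p.1| ≤ |a| + s * |p.1| := by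
      calc |σ₁ * T + s * p.1| ≤ |σ₁ * T| + |s * p.1| := abs_add_le _ _
        _ = |a| + s * |p.1| := by rw [h2, hadef]
    calc stdNormalPDF p.1 * stdNormalPDF p.2 * |σ₁ * T + s * p.1|
        ≤ stdNormalPDF p.1 * stdNormalPDF p.2 * (|a| + s * |p.1|) := by
          have hφφ : (0:ℝ) ≤ stdNormalPDF p.1 * stdNormalPDF p.2 :=
            mul_nonneg (sn_nonneg _) (sn_nonneg _)
          exact mul_le_mul_of_nonneg_left h1 hφφ
      _ = (|a| * stdNormalPDF p.1 + s * (|p.1| * stdNormalPDF p.1)) * stdNormalPDF p.2 := by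
          ring
  rw [MeasureTheory.integral_prod _ hGint]
  -- compute the inner integral
  have hinner : ∀ x : ℝ, (∫ y, A.indicator f₀ (x, y))
      = Set.indicator (Set.Ioi xh)
          (fun x => (σ₁ * T + s * x) * (stdNormalPDF x * stdNormalTail ((yh - ρ * x) / c))) x := by
    intro x
    by_cases hx : xh < x
    · have hfun : (fun y => A.indicator f₀ (x, y))
          = Set.indicator (Set.Ioi ((yh - ρ * x) / c))
              (fun y => (stdNormalPDF x * (σ₁ * T + s * x)) * stdNormalPDF y) := by
        funext y
        by_cases hy : (yh - ρ * x) / c < y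
        · have hmemA : (x, y) ∈ A := ⟨(hiff1 x).1 hx, (hiff2 x y).1 hy⟩
          rw [Set.indicator_of_mem hmemA, Set.indicator_of_mem (Set.mem_Ioi.2 hy)]
          simp only [hf₀def]
          ring
        · have hnA : (x, y) ∉ A := fun hmem => hy ((hiff2 x y).2 hmem.2)
          have hnI : y ∉ Set.Ioi ((yh - ρ * x) / c) := fun hmem => hy (Set.mem_Ioi.1 hmem)
          rw [Set.indicator_of_notMem hnA, Set.indicator_of_notMem hnI]
      rw [hfun, integral_indicator measurableSet_Ioi, integral_const_mul,
        Set.indicator_of_mem (Set.mem_Ioi.2 hx)]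
      show stdNormalPDF x * (σ₁ * T + s * x) * stdNormalTail ((yh - ρ * x) / c) = _
      ring
    · have hfun : (fun y => A.indicator f₀ (x, y)) = fun _ => (0 : ℝ) := by
        funext y
        exact Set.indicator_of_notMem (fun hmem => hx ((hiff1 x).2 hmem.1)) _
      have hnI : x ∉ Set.Ioi xh := hx
      rw [hfun, integral_zero, Set.indicator_of_notMem hnI]
  rw [integral_congr_ae (Filter.Eventually.of_forall hinner),
    integral_indicator measurableSet_Ioi]
  -- split the integral
  have hsplit : ∀ x ∈ Set.Ioi xh, (σ₁ * T + s * x) * (stdNormalPDF x * stdNormalTail ((yh - ρ * x) / c))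
      = a * (stdNormalPDF x * stdNormalTail ((yh - ρ * x) / c))
        + s * (x * stdNormalPDF x * stdNormalTail ((yh - ρ * x) / c)) := by
    intro x _
    rw [hadef]; ring
  rw [setIntegral_congr_fun measurableSet_Ioi hsplit]
  rw [MeasureTheory.integral_add
    (((int_sn_tail c yh).const_mul a).integrableOn)
    (((int_x_sn_tail c yh).const_mul s).integrableOn),
    integral_const_mul, integral_const_mul]
  have hbi := biNormalTail_eq hρ₁ hρ₂ xh yh
  have hlc := lemC hρ₁ hρ₂ xh yh
  rw [← hcdef] at hbi hlc
  rw [← hbi, hlc, hadef]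
end

section
/- Pathwise differentiation of a two-asset correlation call payoff under geometric Brownian motions (identity (dC)): let T > 0, ρ ∈ (−1,1), and let (W₁, W₂) be bivariate normal with mean zero, Var(W₁) = Var(W₂) = T, and Cov(W₁, W₂) = ρT; let s₁, s₂, K, H > 0 and r₁, r₂, σ₂ ∈ ℝ, and set S₂ = s₂ exp((r₂ − σ₂²/2)T + σ₂W₂). Then the function C(σ) = E[ (s₁ exp((r₁ − σ²/2)T + σW₁) − K)⁺ · 1_{{S₂ > H}} ] is differentiable at every σ > 0, with C′(σ) = E[ s₁ exp((r₁ − σ²/2)T + σW₁) · (W₁ − σT) · 1_{{s₁ exp((r₁ − σ²/2)T + σW₁) > K}} · 1_{{S₂ > H}} ]. -/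
open MeasureTheory ProbabilityTheory Topology

lemma aux_gauss_exp (c : ℝ) :
    Integrable (fun x : ℝ => Real.exp (c * x)) (gaussianReal 0 1) := by
  rw [gaussianReal_of_var_ne_zero 0 one_ne_zero]
  rw [integrable_withDensity_iff (measurable_gaussianPDF 0 1)
    (Filter.Eventually.of_forall fun x => ENNReal.ofReal_lt_top)]
  have key : Integrable (fun x : ℝ => Real.exp (c ^ 2 / 2) * (Real.sqrt (2 * Real.pi))⁻¹ *
      Real.exp (-((1:ℝ)/2) * (x - c) ^ 2)) := by
    exact ((integrable_exp_neg_mul_sq (by norm_num : (0:ℝ) < 1/2)).comp_sub_right c).const_mul _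
  refine key.congr ?_
  filter_upwards with x
  rw [gaussianPDF_def, ENNReal.toReal_ofReal (gaussianPDFReal_nonneg _ _ _),
    gaussianPDFReal_def]
  push_cast
  rw [show (2 : ℝ) * Real.pi * 1 = 2 * Real.pi by ring]
  rw [mul_comm (Real.exp (c*x)), mul_assoc, mul_comm (Real.exp (c ^ 2 / 2)),
    mul_assoc, ← Real.exp_add, mul_assoc ((Real.sqrt (2 * Real.pi))⁻¹), ← Real.exp_add]
  congr 1
  ring

lemma aux_gauss_master (c D B : ℝ) :
    Integrable (fun x : ℝ => Real.exp (c * |x|) * (D + B * |x|)) (gaussianReal 0 1) := by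
  have hint : Integrable (fun x : ℝ =>
      (|D| + |B|) * (Real.exp ((|c| + 1) * x) + Real.exp (-(|c| + 1) * x)))
      (gaussianReal 0 1) :=
    ((aux_gauss_exp (|c| + 1)).add (aux_gauss_exp (-(|c| + 1)))).const_mul _
  refine hint.mono ?_ ?_
  · exact ((Real.measurable_exp.comp (measurable_abs.const_mul c)).mul
      ((measurable_abs.const_mul B).const_add D)).aestronglyMeasurable
  filter_upwards with x
  have e1 : (0:ℝ) < Real.exp (c * |x|) := Real.exp_pos _
  have h2 : abs (D + B * |x|) ≤ |D| + |B| * |x| := by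
    calc abs (D + B * |x|) ≤ |D| + abs (B * |x|) := abs_add_le _ _
    _ = |D| + |B| * |x| := by rw [abs_mul, abs_abs]
  have h3 : |D| + |B| * |x| ≤ (|D| + |B|) * Real.exp |x| := by
    have hx1 : (1:ℝ) ≤ Real.exp |x| := Real.one_le_exp (abs_nonneg x)
    have hx2 : |x| ≤ Real.exp |x| := by
      have := Real.add_one_le_exp |x|; linarith
    nlinarith [abs_nonneg D, abs_nonneg B, abs_nonneg x]
  have h4 : Real.exp (c * |x|) ≤ Real.exp (|c| * |x|) :=
    Real.exp_le_exp.2 (mul_le_mul_of_nonneg_right (le_abs_self c) (abs_nonneg x))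
  have h5 : Real.exp (|c| * |x|) * Real.exp |x| = Real.exp ((|c| + 1) * |x|) := by
    rw [← Real.exp_add]; ring_nf
  have h6 : Real.exp ((|c| + 1) * |x|) ≤ Real.exp ((|c| + 1) * x) + Real.exp (-(|c| + 1) * x) := by
    rcases abs_cases x with ⟨h, _⟩ | ⟨h, _⟩
    · rw [h]; nlinarith [Real.exp_pos (-(|c| + 1) * x)]
    · rw [h, show (|c| + 1) * -x = -(|c| + 1) * x by ring]
      nlinarith [Real.exp_pos ((|c| + 1) * x)]
  rw [Real.norm_eq_abs, Real.norm_eq_abs, abs_mul, abs_of_pos e1]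
  have hDB : (0:ℝ) ≤ |D| + |B| := by positivity
  calc Real.exp (c * |x|) * abs (D + B * |x|)
      ≤ Real.exp (|c| * |x|) * ((|D| + |B|) * Real.exp |x|) := by
        apply mul_le_mul h4 (h2.trans h3) (abs_nonneg _) (Real.exp_pos _).le
    _ = (|D| + |B|) * Real.exp ((|c| + 1) * |x|) := by rw [← h5]; ring
    _ ≤ (|D| + |B|) * (Real.exp ((|c| + 1) * x) + Real.exp (-(|c| + 1) * x)) :=
        mul_le_mul_of_nonneg_left h6 hDB
    _ ≤ abs ((|D| + |B|) * (Real.exp ((|c| + 1) * x) + Real.exp (-(|c| + 1) * x))) := le_abs_self _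

lemma aux_hasDerivAt (s₁ r₁ T x σ' : ℝ) :
    HasDerivAt (fun s : ℝ => s₁ * Real.exp ((r₁ - s ^ 2 / 2) * T + s * x))
      (s₁ * Real.exp ((r₁ - σ' ^ 2 / 2) * T + σ' * x) * (x - σ' * T)) σ' := by
  have h1 : HasDerivAt (fun s : ℝ => (r₁ - s ^ 2 / 2) * T + s * x)
      (x - σ' * T) σ' := by
    have ha := (((hasDerivAt_pow 2 σ').div_const 2).const_sub r₁).mul_const T
    have hb := (hasDerivAt_id σ').mul_const x
    refine (ha.add hb).congr_deriv ?_
    simp; ring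
  have := (h1.exp).const_mul s₁
  refine this.congr_deriv ?_
  ring

lemma aux_exp_bound {s₁ T : ℝ} (hs₁ : 0 ≤ s₁) (hT : 0 ≤ T) (r₁ x s : ℝ) :
    s₁ * Real.exp ((r₁ - s ^ 2 / 2) * T + s * x) ≤ s₁ * Real.exp (|r₁| * T + |s| * |x|) := by
  apply mul_le_mul_of_nonneg_left _ hs₁
  apply Real.exp_le_exp.2
  have h1 : (r₁ - s ^ 2 / 2) * T ≤ |r₁| * T := by
    apply mul_le_mul_of_nonneg_right _ hT
    have := le_abs_self r₁; nlinarith [sq_nonneg s]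
  have h2 : s * x ≤ |s| * |x| := (le_abs_self _).trans (abs_mul s x).le
  linarith

/-- **Pathwise differentiation of a two-asset correlation call payoff under geometric Brownian
motions** (identity (dC)). With `(W₁, W₂)` bivariate normal, mean zero, variances `T` and
covariance `ρT`, `S₂ = s₂ exp((r₂ − σ₂²/2)T + σ₂W₂)`, the function
`C(σ) = E[(s₁ e^{(r₁ − σ²/2)T + σW₁} − K)⁺ 1_{S₂ > H}]` is differentiable at every `σ > 0`,
with `C'(σ) = E[s₁ e^{(r₁ − σ²/2)T + σW₁} (W₁ − σT) 1_{s₁ e^{(r₁ − σ²/2)T + σW₁} > K} 1_{S₂ > H}]`. -/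
theorem two_asset_correlation_call_vega
    {Ω : Type*} [MeasurableSpace Ω] (μ : Measure Ω) [IsProbabilityMeasure μ]
    (ξ : Fin 2 → Ω → ℝ) (hmξ : ∀ i, Measurable (ξ i))
    (hindep : iIndepFun ξ μ)
    (hgauss : ∀ i, Measure.map (ξ i) μ = gaussianReal 0 1)
    (T ρ : ℝ) (hT : 0 < T) (hρ₁ : -1 < ρ) (hρ₂ : ρ < 1)
    (s₁ s₂ K H : ℝ) (hs₁ : 0 < s₁) (hs₂ : 0 < s₂) (hK : 0 < K) (hH : 0 < H)
    (r₁ r₂ σ₂ : ℝ)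
    (σ : ℝ) (hσ : 0 < σ) :
    HasDerivAt
      (fun σ' : ℝ =>
        ∫ ω in {ω | H < s₂ * Real.exp ((r₂ - σ₂ ^ 2 / 2) * T
            + σ₂ * (Real.sqrt T * (ρ * ξ 0 ω + Real.sqrt (1 - ρ ^ 2) * ξ 1 ω)))},
          max (s₁ * Real.exp ((r₁ - σ' ^ 2 / 2) * T + σ' * (Real.sqrt T * ξ 0 ω)) - K) 0 ∂μ)
      (∫ ω in {ω | K < s₁ * Real.exp ((r₁ - σ ^ 2 / 2) * T + σ * (Real.sqrt T * ξ 0 ω))}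
          ∩ {ω | H < s₂ * Real.exp ((r₂ - σ₂ ^ 2 / 2) * T
            + σ₂ * (Real.sqrt T * (ρ * ξ 0 ω + Real.sqrt (1 - ρ ^ 2) * ξ 1 ω)))},
        s₁ * Real.exp ((r₁ - σ ^ 2 / 2) * T + σ * (Real.sqrt T * ξ 0 ω)) *
          (Real.sqrt T * ξ 0 ω - σ * T) ∂μ)
      σ := by
  have h0 : Measurable (ξ 0) := hmξ 0
  have h1 : Measurable (ξ 1) := hmξ 1
  have hsqT : (0:ℝ) < Real.sqrt T := Real.sqrt_pos.2 hT
  set A : Set Ω := {ω | H < s₂ * Real.exp ((r₂ - σ₂ ^ 2 / 2) * T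
      + σ₂ * (Real.sqrt T * (ρ * ξ 0 ω + Real.sqrt (1 - ρ ^ 2) * ξ 1 ω)))} with hA_def
  set B : Set Ω := {ω | K < s₁ * Real.exp ((r₁ - σ ^ 2 / 2) * T
      + σ * (Real.sqrt T * ξ 0 ω))} with hB_def
  have hmB : MeasurableSet B := by
    apply measurableSet_lt measurable_const
    fun_prop
  -- pulled-back integrability
  have pull : ∀ c D B' : ℝ,
      Integrable (fun ω => Real.exp (c * |ξ 0 ω|) * (D + B' * |ξ 0 ω|)) μ := by
    intro c D B'
    have h := aux_gauss_master c D B'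
    rw [← hgauss 0] at h
    exact (integrable_map_measure
      (((Real.measurable_exp.comp (measurable_abs.const_mul c)).mul
        ((measurable_abs.const_mul B').const_add D)).aestronglyMeasurable)
      h0.aemeasurable).mp h
  have habsX : ∀ ω, |Real.sqrt T * ξ 0 ω| = Real.sqrt T * |ξ 0 ω| := fun ω => by
    rw [abs_mul, abs_of_pos hsqT]
  -- apply differentiation under the integral sign
  obtain ⟨-, hder⟩ := hasDerivAt_integral_of_dominated_loc_of_lip
    (μ := μ.restrict A) (x₀ := σ)
    (F := fun σ' ω => max (s₁ * Real.exp ((r₁ - σ' ^ 2 / 2) * T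
      + σ' * (Real.sqrt T * ξ 0 ω)) - K) 0)
    (F' := B.indicator (fun ω =>
      s₁ * Real.exp ((r₁ - σ ^ 2 / 2) * T + σ * (Real.sqrt T * ξ 0 ω)) *
        (Real.sqrt T * ξ 0 ω - σ * T)))
    (bound := fun ω => s₁ * Real.exp (|r₁| * T) *
      (Real.exp (3 * σ / 2 * Real.sqrt T * |ξ 0 ω|) *
        (3 * σ / 2 * T + Real.sqrt T * |ξ 0 ω|)))
    (Metric.ball_mem_nhds σ (half_pos hσ))
    (Filter.Eventually.of_forall fun s => by
      apply Measurable.aestronglyMeasurable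
      fun_prop)
    (by -- integrability of F σ
      have hg : Integrable (fun ω => s₁ * Real.exp (|r₁| * T) *
          (Real.exp (σ * Real.sqrt T * |ξ 0 ω|) * (1 + 0 * |ξ 0 ω|))) μ :=
        (pull (σ * Real.sqrt T) 1 0).const_mul _
      refine (hg.restrict.mono' (by apply Measurable.aestronglyMeasurable; fun_prop) ?_)
      filter_upwards with ω
      rw [Real.norm_eq_abs]
      have e0 : (0:ℝ) < Real.exp ((r₁ - σ ^ 2 / 2) * T + σ * (Real.sqrt T * ξ 0 ω)) :=
        Real.exp_pos _
      have hb := aux_exp_bound hs₁.le hT.le r₁ (Real.sqrt T * ξ 0 ω) σ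
      rw [abs_of_pos hσ, habsX ω] at hb
      have hmax : max (s₁ * Real.exp ((r₁ - σ ^ 2 / 2) * T
          + σ * (Real.sqrt T * ξ 0 ω)) - K) 0 ≤
          s₁ * Real.exp ((r₁ - σ ^ 2 / 2) * T + σ * (Real.sqrt T * ξ 0 ω)) :=
        max_le (by nlinarith) (by positivity)
      rw [abs_of_nonneg (le_max_right _ _)]
      calc max (s₁ * Real.exp ((r₁ - σ ^ 2 / 2) * T + σ * (Real.sqrt T * ξ 0 ω)) - K) 0
          ≤ s₁ * Real.exp (|r₁| * T + σ * Real.sqrt T * |ξ 0 ω|) := by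
            rw [mul_assoc σ]; exact hmax.trans hb
        _ = s₁ * Real.exp (|r₁| * T) * (Real.exp (σ * Real.sqrt T * |ξ 0 ω|) *
            (1 + 0 * |ξ 0 ω|)) := by rw [Real.exp_add]; ring)
    (by -- measurability of F'
      apply Measurable.aestronglyMeasurable
      apply Measurable.indicator _ hmB
      fun_prop)
    (Filter.Eventually.of_forall fun ω => by -- Lipschitz bound
      set x : ℝ := Real.sqrt T * ξ 0 ω with hx_def
      have hL1 : LipschitzOnWith (Real.nnabs (s₁ * Real.exp (|r₁| * T) *
          (Real.exp (3 * σ / 2 * Real.sqrt T * |ξ 0 ω|) *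
            (3 * σ / 2 * T + Real.sqrt T * |ξ 0 ω|))))
          (fun s => s₁ * Real.exp ((r₁ - s ^ 2 / 2) * T + s * x) - K)
          (Metric.ball σ (σ / 2)) := by
        apply (convex_ball σ (σ / 2)).lipschitzOnWith_of_nnnorm_hasDerivWithin_le
          (f' := fun s => s₁ * Real.exp ((r₁ - s ^ 2 / 2) * T + s * x) * (x - s * T))
          (fun s _ => ((aux_hasDerivAt s₁ r₁ T x s).sub_const K).hasDerivWithinAt)
        intro s hs
        rw [← NNReal.coe_le_coe, coe_nnnorm, Real.coe_nnabs, Real.norm_eq_abs]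
        have hsb : |s| ≤ 3 * σ / 2 := by
          rw [Metric.mem_ball, Real.dist_eq] at hs
          have h := abs_sub_abs_le_abs_sub s σ
          rw [abs_of_pos hσ] at h
          linarith
        have e0 : (0:ℝ) < Real.exp ((r₁ - s ^ 2 / 2) * T + s * x) := Real.exp_pos _
        have hb := aux_exp_bound hs₁.le hT.le r₁ x s
        have hxs : |x - s * T| ≤ |x| + 3 * σ / 2 * T := by
          calc |x - s * T| ≤ |x| + |s * T| := abs_sub _ _
          _ = |x| + |s| * T := by rw [abs_mul s T, abs_of_pos hT]
          _ ≤ |x| + 3 * σ / 2 * T := by nlinarith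
        have hexp : Real.exp (|r₁| * T + |s| * |x|) ≤
            Real.exp (|r₁| * T + 3 * σ / 2 * |x|) := by
          apply Real.exp_le_exp.2
          have : |s| * |x| ≤ 3 * σ / 2 * |x| :=
            mul_le_mul_of_nonneg_right hsb (abs_nonneg x)
          linarith
        calc |s₁ * Real.exp ((r₁ - s ^ 2 / 2) * T + s * x) * (x - s * T)|
            = s₁ * Real.exp ((r₁ - s ^ 2 / 2) * T + s * x) * |x - s * T| := by
              rw [abs_mul]; congr 1; rw [abs_of_pos (by positivity)]
          _ ≤ s₁ * Real.exp (|r₁| * T + 3 * σ / 2 * |x|) * (|x| + 3 * σ / 2 * T) := by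
              apply mul_le_mul (hb.trans (mul_le_mul_of_nonneg_left hexp hs₁.le)) hxs (abs_nonneg _) (by positivity)
          _ = s₁ * Real.exp (|r₁| * T) *
              (Real.exp (3 * σ / 2 * Real.sqrt T * |ξ 0 ω|) *
                (3 * σ / 2 * T + Real.sqrt T * |ξ 0 ω|)) := by
              rw [Real.exp_add, hx_def, habsX ω]; ring
          _ ≤ |s₁ * Real.exp (|r₁| * T) *
              (Real.exp (3 * σ / 2 * Real.sqrt T * |ξ 0 ω|) *
                (3 * σ / 2 * T + Real.sqrt T * |ξ 0 ω|))| := le_abs_self _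
      have hL2 : LipschitzWith 1 (fun y : ℝ => max y 0) :=
        LipschitzWith.id.max_const 0
      have := hL2.comp_lipschitzOnWith hL1
      simpa [Function.comp_def] using this)
    (by -- integrability of bound
      exact ((pull (3 * σ / 2 * Real.sqrt T) (3 * σ / 2 * T) (Real.sqrt T)).const_mul
        (s₁ * Real.exp (|r₁| * T))).restrict)
    (by -- a.e. differentiability at σ
      apply ae_restrict_of_ae
      set c : ℝ := (Real.log (K / s₁) - (r₁ - σ ^ 2 / 2) * T) / (σ * Real.sqrt T) with hc_def
      have hc : μ {ω | ξ 0 ω = c} = 0 := by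
        have hpre : {ω | ξ 0 ω = c} = ξ 0 ⁻¹' {c} := rfl
        rw [hpre, ← Measure.map_apply h0 (measurableSet_singleton c), hgauss 0]
        exact gaussianReal_absolutelyContinuous 0 one_ne_zero (measure_singleton c)
      have hae : ∀ᵐ ω ∂μ, ξ 0 ω ≠ c := by
        rw [Filter.eventually_iff, mem_ae_iff]
        convert hc using 2
        ext ω; simp
      filter_upwards [hae] with ω hω
      have hσT : σ * Real.sqrt T ≠ 0 := by positivity
      have hne : s₁ * Real.exp ((r₁ - σ ^ 2 / 2) * T + σ * (Real.sqrt T * ξ 0 ω)) ≠ K := by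
        intro h
        apply hω
        have h2 : Real.exp ((r₁ - σ ^ 2 / 2) * T + σ * (Real.sqrt T * ξ 0 ω)) = K / s₁ := by
          rw [eq_div_iff (ne_of_gt hs₁)]
          linarith
        have h3 : (r₁ - σ ^ 2 / 2) * T + σ * (Real.sqrt T * ξ 0 ω) = Real.log (K / s₁) := by
          rw [← h2, Real.log_exp]
        rw [hc_def, eq_div_iff hσT]
        linear_combination h3
      have hcont : ContinuousAt (fun s : ℝ => s₁ * Real.exp ((r₁ - s ^ 2 / 2) * T
          + s * (Real.sqrt T * ξ 0 ω))) σ :=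
        (aux_hasDerivAt s₁ r₁ T (Real.sqrt T * ξ 0 ω) σ).continuousAt
      rcases hne.lt_or_gt with hlt | hgt
      · -- out of the money: local derivative 0
        have hev : ∀ᶠ s in 𝓝 σ, s₁ * Real.exp ((r₁ - s ^ 2 / 2) * T
            + s * (Real.sqrt T * ξ 0 ω)) < K :=
          hcont.eventually_lt continuousAt_const hlt
        have hmem : ω ∉ B := by
          rw [hB_def]; simp only [Set.mem_setOf_eq, not_lt]; exact hlt.le
        have hF'0 : B.indicator (fun ω =>
            s₁ * Real.exp ((r₁ - σ ^ 2 / 2) * T + σ * (Real.sqrt T * ξ 0 ω)) *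
              (Real.sqrt T * ξ 0 ω - σ * T)) ω = 0 := Set.indicator_of_notMem hmem _
        rw [hF'0]
        exact (hasDerivAt_const σ (0:ℝ)).congr_of_eventuallyEq
          (hev.mono fun s hs => max_eq_right (by linarith))
      · -- in the money: local derivative g'
        have hev : ∀ᶠ s in 𝓝 σ, K < s₁ * Real.exp ((r₁ - s ^ 2 / 2) * T
            + s * (Real.sqrt T * ξ 0 ω)) :=
          continuousAt_const.eventually_lt hcont hgt
        have hmem : ω ∈ B := hgt
        have hF'v : B.indicator (fun ω =>
            s₁ * Real.exp ((r₁ - σ ^ 2 / 2) * T + σ * (Real.sqrt T * ξ 0 ω)) *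
              (Real.sqrt T * ξ 0 ω - σ * T)) ω =
            s₁ * Real.exp ((r₁ - σ ^ 2 / 2) * T + σ * (Real.sqrt T * ξ 0 ω)) *
              (Real.sqrt T * ξ 0 ω - σ * T) := Set.indicator_of_mem hmem _
        rw [hF'v]
        exact ((aux_hasDerivAt s₁ r₁ T (Real.sqrt T * ξ 0 ω) σ).sub_const K).congr_of_eventuallyEq
          (hev.mono fun s hs => max_eq_left (by linarith)))
  -- rewrite the value of the derivative
  have hval : (∫ ω, B.indicator (fun ω =>
      s₁ * Real.exp ((r₁ - σ ^ 2 / 2) * T + σ * (Real.sqrt T * ξ 0 ω)) *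
        (Real.sqrt T * ξ 0 ω - σ * T)) ω ∂(μ.restrict A)) =
      ∫ ω in B ∩ A,
        s₁ * Real.exp ((r₁ - σ ^ 2 / 2) * T + σ * (Real.sqrt T * ξ 0 ω)) *
          (Real.sqrt T * ξ 0 ω - σ * T) ∂μ := by
    rw [integral_indicator hmB, Measure.restrict_restrict hmB]
  rw [hval] at hder
  exact hder
end
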